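/- The relation ≺ on binary strings, defined as the transitive closure of the relations s·0·t ≺ s and s ≺ s·1·t' for all strings s, t, t', is a strict total order. -/

import Mathlib

/-- The base relations: `s·0·t ≺ s` and `s ≺ s·1·t'`. -/
def PrecBase (a b : List Bool) : Prop :=
  (∃ s t, a = s ++ false :: t ∧ b = s) ∨ (∃ s t, b = s ++ true :: t ∧ a = s)

/-- The order `≺` on binary strings: the transitive closure of `PrecBase`. -/
def Prec : List Bool → List Bool → Prop :=
  Relation.TransGen PrecBase

private def gg (b : Bool) : ℕ := if b then 2 else 0

private def ff (a : List Bool) : List ℕ := a.map gg ++ [1]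

lemma lex_append_left {α} {r : α → α → Prop} (u : List α) {v w : List α}
    (h : List.Lex r v w) : List.Lex r (u ++ v) (u ++ w) := by
  induction u with
  | nil => simpa
  | cons x u ih => exact List.Lex.cons ih

lemma base_lex {a b : List Bool} (h : PrecBase a b) : List.Lex (· < ·) (ff a) (ff b) := by
  rcases h with ⟨s, t, rfl, rfl⟩ | ⟨s, t, rfl, rfl⟩
  · have h1 : List.Lex (· < ·) ((0:ℕ) :: (t.map gg ++ [1])) [1] := List.Lex.rel (by norm_num)
    simpa [ff, gg] using lex_append_left (b.map gg) h1
  · have h1 : List.Lex (· < ·) [(1:ℕ)] ((2:ℕ) :: (t.map gg ++ [1])) := List.Lex.rel (by norm_num)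
    simpa [ff, gg] using lex_append_left (a.map gg) h1

lemma prec_lex {a b : List Bool} (h : Prec a b) : List.Lex (· < ·) (ff a) (ff b) := by
  induction h with
  | single h => exact base_lex h
  | tail _ h ih => exact List.lex_trans Nat.lt_trans ih (base_lex h)

lemma precBase_cons (x : Bool) {a b : List Bool} (h : PrecBase a b) :
    PrecBase (x :: a) (x :: b) := by
  rcases h with ⟨s, t, rfl, rfl⟩ | ⟨s, t, rfl, rfl⟩
  · exact Or.inl ⟨x :: b, t, rfl, rfl⟩
  · exact Or.inr ⟨x :: a, t, rfl, rfl⟩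

lemma prec_cons (x : Bool) {a b : List Bool} (h : Prec a b) : Prec (x :: a) (x :: b) := by
  induction h with
  | single h => exact .single (precBase_cons x h)
  | tail _ h ih => exact ih.tail (precBase_cons x h)

lemma prec_false_nil (a : List Bool) : Prec (false :: a) [] :=
  .single (Or.inl ⟨[], a, rfl, rfl⟩)

lemma prec_nil_true (a : List Bool) : Prec [] (true :: a) :=
  .single (Or.inr ⟨[], a, rfl, rfl⟩)

lemma prec_total : ∀ a b : List Bool, a ≠ b → Prec a b ∨ Prec b a := by
  intro a
  induction a with
  | nil =>
    intro b hb
    match b with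
    | [] => exact absurd rfl hb
    | true :: b' => exact Or.inl (prec_nil_true b')
    | false :: b' => exact Or.inr (prec_false_nil b')
  | cons x a' ih =>
    intro b hb
    match b with
    | [] =>
      cases x with
      | true => exact Or.inr (prec_nil_true a')
      | false => exact Or.inl (prec_false_nil a')
    | y :: b' =>
      by_cases hxy : x = y
      · subst hxy
        have h' : a' ≠ b' := fun h => hb (by rw [h])
        rcases ih b' h' with h | h
        · exact Or.inl (prec_cons x h)
        · exact Or.inr (prec_cons x h)
      · cases x with
        | true =>
          have hy : y = false := by cases y <;> simp_all
          subst hy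
          exact Or.inr ((prec_false_nil b').trans (prec_nil_true a'))
        | false =>
          have hy : y = true := by cases y <;> simp_all
          subst hy
          exact Or.inl ((prec_false_nil a').trans (prec_nil_true b'))

/-- `≺` is a strict total order on binary strings. -/
theorem stmt13 : IsStrictTotalOrder (List Bool) Prec := by
  refine { trichotomous := ?_, irrefl := ?_, trans := ?_ }
  · intro a b
    by_cases h : a = b
    · exact fun _ _ => h
    · rcases prec_total a b h with h' | h'
      · exact fun h1 _ => absurd h' h1
      · exact fun _ h2 => absurd h' h2
  · intro a h
    exact absurd (prec_lex h) (irrefl _)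
  · intro a b c hab hbc
    exact hab.trans hbc
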